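/- arXiv:1904.05428 — 6 statements merged into one kernel-verified Lean document; each statement's English description precedes it below -/
import Mathlib

section
/- For every real ζ, there exist single-variable real polynomials p2, p3, p4, p5, p6 such that for all real x, y, z: (x^2 y + 2xyz) - ((x+ζ)^2 y + 2(x+ζ)yz) = p2(y-z) + p3(x+z) + p4(x-z) + p5(x+y+\sqrt{2}z) + p6(x+y-\sqrt{2}z). -/
open Polynomial

theorem stmt_2 (ζ : ℝ) :
    ∃ p2 p3 p4 p5 p6 : Polynomial ℝ, ∀ x y z : ℝ,
      (x^2*y + 2*x*y*z) - ((x + ζ)^2*y + 2*(x + ζ)*y*z) =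
        p2.eval (y - z) + p3.eval (x + z) + p4.eval (x - z)
          + p5.eval (x + y + Real.sqrt 2 * z) + p6.eval (x + y - Real.sqrt 2 * z) := by
  refine ⟨C ζ * X^2, C (ζ/2) * X^2 + C (ζ^2/2) * X, C (ζ/2) * X^2 + C (ζ^2/2) * X,
    -(C (ζ/2) * X^2 + C (ζ^2/2) * X), -(C (ζ/2) * X^2 + C (ζ^2/2) * X), fun x y z => ?_⟩
  have hr : Real.sqrt 2 ^ 2 = 2 := Real.sq_sqrt (by norm_num)
  simp only [eval_add, eval_neg, eval_mul, eval_pow, eval_C, eval_X]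
  linear_combination (ζ*z^2) * hr
end

section
/- Let P : ℝ → ℝ be a polynomial of degree at least 3 and let ζ ≠ 0. Then there do NOT exist single-variable real polynomials p2,...,p6 such that for all x,y,z: P(x) - P(x+ζ) = p2(y-z) - p3(x+z) - p4(x-z) - p5(x+y+\sqrt{2}z) - p6(x+y-\sqrt{2}z). -/
open Polynomial

lemma D2c (p q : ℝ[X]) (b : ℝ) (hq : derivative q = C b) :
    derivative (derivative (p.comp q)) =
      C (b * b) * (derivative (derivative p)).comp q := by
  rw [derivative_comp, hq, derivative_mul, derivative_comp, hq, derivative_C, map_mul]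
  ring

lemma periodic_const (q : ℝ[X]) (c : ℝ) (hc : c ≠ 0)
    (h : ∀ x : ℝ, q.eval (x + c) = q.eval x) : q = C (q.eval 0) := by
  have h0 : ∀ n : ℕ, q.eval (n * c) = q.eval 0 := by
    intro n
    induction n with
    | zero => simp
    | succ n ih => push_cast; rw [add_mul, one_mul, h, ih]
  have hinj : Function.Injective (fun n : ℕ => (n : ℝ) * c) := by
    intro m n hmn
    simp only at hmn
    exact_mod_cast mul_right_cancel₀ hc hmn
  have hz := Polynomial.eq_zero_of_infinite_isRoot (q - C (q.eval 0))
    (Set.infinite_of_injective_forall_mem hinj (fun n => by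
      simp [Polynomial.IsRoot, h0 n]))
  exact sub_eq_zero.mp hz

theorem stmt_7 (P : Polynomial ℝ) (hP : 3 ≤ P.natDegree) (ζ : ℝ) (hζ : ζ ≠ 0) :
    ¬ ∃ p2 p3 p4 p5 p6 : Polynomial ℝ, ∀ x y z : ℝ,
        P.eval x - P.eval (x + ζ) =
          p2.eval (y - z) - p3.eval (x + z) - p4.eval (x - z)
            - p5.eval (x + y + Real.sqrt 2 * z) - p6.eval (x + y - Real.sqrt 2 * z) := by
  rintro ⟨p2, p3, p4, p5, p6, h⟩
  -- identity in x
  have Hx : ∀ y z : ℝ, P - P.comp (X + C ζ) =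
      C (p2.eval (y - z)) - p3.comp (X + C z) - p4.comp (X - C z)
        - p5.comp (X + C y + C (Real.sqrt 2 * z))
        - p6.comp (X + C y - C (Real.sqrt 2 * z)) := by
    intro y z
    apply Polynomial.funext
    intro t
    have ht := h t y z
    simp only [eval_sub, eval_comp, eval_add, eval_C, eval_X]
    linarith [ht]
  have E1 : ∀ x y z : ℝ, (derivative (derivative P)).eval x - (derivative (derivative P)).eval (x + ζ) =
      -((derivative (derivative p3)).eval (x + z)) - (derivative (derivative p4)).eval (x - z)
        - (derivative (derivative p5)).eval (x + y + Real.sqrt 2 * z) - (derivative (derivative p6)).eval (x + y - Real.sqrt 2 * z) := by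
    intro x y z
    have hD := congrArg (fun r : ℝ[X] => derivative (derivative r)) (Hx y z)
    simp only [derivative_sub, derivative_C, map_sub,
      D2c P (X + C ζ) 1 (by simp),
      D2c p3 (X + C z) 1 (by simp),
      D2c p4 (X - C z) 1 (by simp),
      D2c p5 (X + C y + C (Real.sqrt 2 * z)) 1 (by simp),
      D2c p6 (X + C y - C (Real.sqrt 2 * z)) 1 (by simp)] at hD
    have he := congrArg (eval x) hD
    simp only [derivative_zero, eval_sub, eval_mul, eval_comp, eval_add, eval_zero, eval_C,
      eval_X, eval_neg, one_mul, mul_one, map_one, zero_sub] at he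
    linarith [he]
  -- identity in y
  have Hy : ∀ x z : ℝ, C (P.eval x - P.eval (x + ζ)) =
      p2.comp (X - C z) - C (p3.eval (x + z)) - C (p4.eval (x - z))
        - p5.comp (C x + X + C (Real.sqrt 2 * z))
        - p6.comp (C x + X - C (Real.sqrt 2 * z)) := by
    intro x z
    apply Polynomial.funext
    intro t
    have ht := h x t z
    simp only [eval_sub, eval_comp, eval_add, eval_C, eval_X]
    linarith [ht]
  have E2 : ∀ x y z : ℝ, (0:ℝ) =
      (derivative (derivative p2)).eval (y - z) - (derivative (derivative p5)).eval (x + y + Real.sqrt 2 * z)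
        - (derivative (derivative p6)).eval (x + y - Real.sqrt 2 * z) := by
    intro x y z
    have hD := congrArg (fun r : ℝ[X] => derivative (derivative r)) (Hy x z)
    simp only [derivative_sub, derivative_C, map_sub,
      D2c p2 (X - C z) 1 (by simp),
      D2c p5 (C x + X + C (Real.sqrt 2 * z)) 1 (by simp),
      D2c p6 (C x + X - C (Real.sqrt 2 * z)) 1 (by simp)] at hD
    have he := congrArg (eval y) hD
    simp only [derivative_zero, eval_sub, eval_mul, eval_comp, eval_add, eval_zero, eval_C,
      eval_X, eval_neg, one_mul, mul_one, map_one, zero_sub] at he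
    linarith [he]
  -- identity in z
  have Hz : ∀ x y : ℝ, C (P.eval x - P.eval (x + ζ)) =
      p2.comp (C y - X) - p3.comp (C x + X) - p4.comp (C x - X)
        - p5.comp (C x + C y + C (Real.sqrt 2) * X)
        - p6.comp (C x + C y - C (Real.sqrt 2) * X) := by
    intro x y
    apply Polynomial.funext
    intro t
    have ht := h x y t
    simp only [eval_sub, eval_comp, eval_add, eval_mul, eval_C, eval_X]
    linarith [ht]
  have E3 : ∀ x y z : ℝ, (0:ℝ) =
      (derivative (derivative p2)).eval (y - z) - (derivative (derivative p3)).eval (x + z) - (derivative (derivative p4)).eval (x - z)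
        - 2 * (derivative (derivative p5)).eval (x + y + Real.sqrt 2 * z)
        - 2 * (derivative (derivative p6)).eval (x + y - Real.sqrt 2 * z) := by
    intro x y z
    have hs2 : Real.sqrt 2 * Real.sqrt 2 = 2 := Real.mul_self_sqrt (by norm_num)
    have hD := congrArg (fun r : ℝ[X] => derivative (derivative r)) (Hz x y)
    simp only [derivative_sub, derivative_C, map_sub,
      D2c p2 (C y - X) (-1) (by simp),
      D2c p3 (C x + X) 1 (by simp),
      D2c p4 (C x - X) (-1) (by simp),
      D2c p5 (C x + C y + C (Real.sqrt 2) * X) (Real.sqrt 2) (by simp),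
      D2c p6 (C x + C y - C (Real.sqrt 2) * X) (-Real.sqrt 2) (by simp)] at hD
    have he := congrArg (eval z) hD
    simp only [eval_sub, eval_mul, eval_comp, eval_add, eval_zero, eval_C, eval_X, one_mul,
      neg_mul_neg, eval_neg, mul_one, one_mul, map_one, derivative_zero, zero_sub] at he
    rw [hs2] at he
    linarith [he]
  -- combine: Q is ζ-periodic
  have hper : ∀ x : ℝ, (derivative (derivative P)).eval (x + ζ) = (derivative (derivative P)).eval x := by
    intro x
    have e1 := E1 x 0 0
    have e2 := E2 x 0 0
    have e3 := E3 x 0 0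
    linarith [e1, e2, e3]
  have hconst := periodic_const (derivative (derivative P)) ζ hζ hper
  -- but the second derivative has positive degree
  have hP0 : P ≠ 0 := by
    intro h0
    rw [h0, natDegree_zero] at hP
    omega
  have hp0 : P.coeff P.natDegree ≠ 0 := by
    rw [coeff_natDegree]
    exact leadingCoeff_ne_zero.mpr hP0
  have h1 : (P.natDegree - 2) + 1 = P.natDegree - 1 := by omega
  have h2 : (P.natDegree - 1) + 1 = P.natDegree := by omega
  have c1 := coeff_derivative (derivative P) (P.natDegree - 2)
  have c2 := coeff_derivative P (P.natDegree - 1)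
  rw [h1, c2, h2] at c1
  have hC : (derivative (derivative P)).coeff (P.natDegree - 2) = 0 := by
    rw [hconst, coeff_C, if_neg (by omega)]
  rw [hC] at c1
  have hne1 : ((P.natDegree - 1 : ℕ) : ℝ) + 1 ≠ 0 := by positivity
  have hne2 : ((P.natDegree - 2 : ℕ) : ℝ) + 1 ≠ 0 := by positivity
  exact mul_ne_zero (mul_ne_zero hp0 hne1) hne2 c1.symm
end

section
/- For every ζ ≥ 1, there are no single-variable real polynomials p2, p3, p4, p5, p6 satisfying, for all real x, y, z: x^2 y^2 - (x+ζ)^2 y^2 = p2(y-z) + p3(x+z) + p4(x-z) + p5(x+y+\sqrt{2}z) + p6(x+y-\sqrt{2}z). -/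
open Polynomial

theorem stmt_9 (ζ : ℝ) (hζ : 1 ≤ ζ) :
    ¬ ∃ p2 p3 p4 p5 p6 : Polynomial ℝ, ∀ x y z : ℝ,
        x^2*y^2 - (x + ζ)^2*y^2 =
          p2.eval (y - z) + p3.eval (x + z) + p4.eval (x - z)
            + p5.eval (x + y + Real.sqrt 2 * z) + p6.eval (x + y - Real.sqrt 2 * z) := by
  rintro ⟨p2, p3, p4, p5, p6, H⟩
  have h0 := H 0 0 0
  have ha := H 1 (-1) 0
  have hb := H 0 1 0
  have hc := H 0 1 1
  have hab := H 1 0 0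
  have hac := H 1 0 1
  have hbc := H 0 2 1
  have habc := H 1 1 1
  norm_num at h0 ha hb hc hab hac hbc habc
  nlinarith [h0, ha, hb, hc, hab, hac, hbc, habc, hζ]
end

section
/- There exist no single-variable real polynomials q1, q2, q3 such that x^2 y = q1(x) + q2(y) + q3(x+y) for all real x, y; that is, the polynomial x^2 y is nondegenerate with respect to the projections (x,y) ↦ x, y, x+y. -/
open Polynomial

theorem stmt_12 :
    ¬ ∃ q1 q2 q3 : Polynomial ℝ, ∀ x y : ℝ,
        x^2*y = q1.eval x + q2.eval y + q3.eval (x + y) := by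
  rintro ⟨q1, q2, q3, h⟩
  have h1 := h 2 1
  have h2 := h 1 2
  have h3 := h 2 0
  have h4 := h 1 1
  have h5 := h 0 2
  have h6 := h 1 0
  have h7 := h 0 1
  norm_num at h1 h2 h3 h4 h5 h6 h7
  linarith
end

section
/- The six vectors v1=(0,1,1), v2=(0,1,-1), v3=(1,0,1), v4=(1,0,-1), v5=(1,1,\sqrt{2}), v6=(1,1,-\sqrt{2}) in ℝ^3 are in general position: every subcollection of k of them spans a subspace of dimension min(k,3). -/
/-- The six light-cone vectors. -/
noncomputable def lightVecs : Fin 6 → (Fin 3 → ℝ) :=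
  ![![0, 1, 1], ![0, 1, -1], ![1, 0, 1], ![1, 0, -1],
    ![1, 1, Real.sqrt 2], ![1, 1, -Real.sqrt 2]]

@[simp] lemma cons_val_five' {α : Type*} {n : ℕ} (x : α) (u : Fin (n+5) → α) :
    Matrix.vecCons x u 5 =
      Matrix.vecHead (Matrix.vecTail (Matrix.vecTail (Matrix.vecTail (Matrix.vecTail u)))) := rfl

set_option maxHeartbeats 2000000 in
lemma li3 (i j k : Fin 6) (hij : i ≠ j) (hik : i ≠ k) (hjk : j ≠ k) :
    LinearIndependent ℝ ![lightVecs i, lightVecs j, lightVecs k] := by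
  have h2 : Real.sqrt 2 ^ 2 = 2 := Real.sq_sqrt (by norm_num)
  have hpos : (0:ℝ) < Real.sqrt 2 := Real.sqrt_pos.2 (by norm_num)
  have key : (Matrix.of ![lightVecs i, lightVecs j, lightVecs k]).det ≠ 0 := by
    fin_cases i <;> fin_cases j <;> fin_cases k <;>
      first
      | exact absurd rfl hij
      | exact absurd rfl hik
      | exact absurd rfl hjk
      | (simp [Matrix.det_fin_three, lightVecs, Matrix.vecHead, Matrix.vecTail] <;>
          nlinarith [h2, hpos])
  exact Matrix.linearIndependent_rows_iff_isUnit.2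
    ((Matrix.isUnit_iff_isUnit_det _).2 (isUnit_iff_ne_zero.2 key))

lemma lightVecs_injective : Function.Injective lightVecs := by
  have hpos : (0:ℝ) < Real.sqrt 2 := Real.sqrt_pos.2 (by norm_num)
  intro a b hab
  have h0 := congr_fun hab 0
  have h1 := congr_fun hab 1
  have h2 := congr_fun hab 2
  fin_cases a <;> fin_cases b <;> first
    | rfl
    | (exfalso
       simp [lightVecs, Matrix.vecHead, Matrix.vecTail] at h0 h1 h2 <;> linarith)

lemma liOn (t : Finset (Fin 6)) (ht : t.card ≤ 3) :
    LinearIndependent ℝ ((↑) : (lightVecs '' ↑t) → (Fin 3 → ℝ)) := by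
  obtain ⟨u, htu, -, hu⟩ := Finset.exists_subsuperset_card_eq (Finset.subset_univ t) ht (by simp)
  obtain ⟨i, j, k, hij, hik, hjk, rfl⟩ := Finset.card_eq_three.1 hu
  have h := (li3 i j k hij hik hjk).linearIndepOn_id
  have hr : Set.range ![lightVecs i, lightVecs j, lightVecs k]
      = lightVecs '' ↑({i, j, k} : Finset (Fin 6)) := by
    ext x
    simp [Set.image_insert_eq, Fin.exists_fin_succ]
    constructor
    · rintro (rfl | rfl | rfl) <;> tauto
    · rintro (rfl | rfl | rfl) <;> tauto
  rw [hr] at h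
  exact h.mono (Set.image_mono (by exact_mod_cast htu))

theorem stmt_14 :
    ∀ s : Finset (Fin 6),
      Module.finrank ℝ (Submodule.span ℝ (lightVecs '' ↑s)) = min s.card 3 := by
  intro s
  obtain ⟨t, hts, htc⟩ := s.exists_subset_card_eq (min_le_left _ _)
  have hli := liOn t (htc ▸ min_le_right _ _)
  rw [← Finset.coe_image] at hli
  have h1 : Module.finrank ℝ (Submodule.span ℝ (lightVecs '' ↑t)) = min s.card 3 := by
    rw [← Finset.coe_image, finrank_span_finset_eq_card hli,
      Finset.card_image_of_injOn, htc]
    exact Set.injOn_of_injective lightVecs_injective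
  have hle : Submodule.span ℝ (lightVecs '' ↑t) ≤ Submodule.span ℝ (lightVecs '' ↑s) :=
    Submodule.span_mono (Set.image_mono (by exact_mod_cast hts))
  have hlow : min s.card 3 ≤ Module.finrank ℝ (Submodule.span ℝ (lightVecs '' ↑s)) :=
    h1 ▸ Submodule.finrank_mono hle
  have hup1 : Module.finrank ℝ (Submodule.span ℝ (lightVecs '' ↑s)) ≤ s.card := by
    rw [← Finset.coe_image]
    exact (finrank_span_finset_le_card _).trans (Finset.card_image_le)
  have hup2 : Module.finrank ℝ (Submodule.span ℝ (lightVecs '' ↑s)) ≤ 3 := by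
    have := Submodule.finrank_le (Submodule.span ℝ (lightVecs '' (↑s : Set (Fin 6))))
    simpa using this
  omega
end

section
/- There do not exist single-variable real polynomials p1,...,p6 such that x^3 = p1(y+z) + p2(y-z) + p3(x+z) + p4(x-z) + p5(x+y+\sqrt{2}z) + p6(x+y-\sqrt{2}z) for all real x, y, z; i.e., P(x,y,z) = x^3 is nondegenerate with respect to the six light-cone projections. -/
open Polynomial

noncomputable def lin19 (a b c : ℝ) : MvPolynomial (Fin 3) ℝ :=
  MvPolynomial.C a * MvPolynomial.X 0 + MvPolynomial.C b * MvPolynomial.X 1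
    + MvPolynomial.C c * MvPolynomial.X 2

open MvPolynomial in
noncomputable def box19 (f : MvPolynomial (Fin 3) ℝ) : MvPolynomial (Fin 3) ℝ :=
  pderiv 0 (pderiv 0 f) + pderiv 1 (pderiv 1 f) - pderiv 2 (pderiv 2 f)

open MvPolynomial in
lemma box19_add (f g : MvPolynomial (Fin 3) ℝ) : box19 (f + g) = box19 f + box19 g := by
  simp [box19]; ring

open MvPolynomial in
lemma pderiv_aeval_lin (a b c : ℝ) (p : ℝ[X]) (i : Fin 3) :
    pderiv i (Polynomial.aeval (lin19 a b c) p)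
      = MvPolynomial.C (![a,b,c] i) * Polynomial.aeval (lin19 a b c) (derivative p) := by
  rw [Derivation.map_aeval]
  fin_cases i <;>
    simp [lin19, pderiv_C_mul, pderiv_X_self, pderiv_X_of_ne, smul_eq_mul, mul_comm]

open MvPolynomial in
lemma box19_aeval (a b c : ℝ) (h : a^2 + b^2 = c^2) (p : ℝ[X]) :
    box19 (Polynomial.aeval (lin19 a b c) p) = 0 := by
  simp only [box19, pderiv_aeval_lin, pderiv_C_mul]
  have hc : (MvPolynomial.C a * MvPolynomial.C a + MvPolynomial.C b * MvPolynomial.C b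
      - MvPolynomial.C c * MvPolynomial.C c : MvPolynomial (Fin 3) ℝ) = 0 := by
    rw [← MvPolynomial.C_mul, ← MvPolynomial.C_mul, ← MvPolynomial.C_mul,
      ← MvPolynomial.C_add, ← MvPolynomial.C_sub,
      show a*a + b*b - c*c = 0 by nlinarith, MvPolynomial.C_0]
  simp only [Matrix.cons_val_zero, Matrix.cons_val_one, Matrix.head_cons,
    Matrix.cons_val_two, Matrix.tail_cons]
  linear_combination (Polynomial.aeval (lin19 a b c) (derivative (derivative p))) * hc

open MvPolynomial in
lemma eval_aeval_lin (v : Fin 3 → ℝ) (L : MvPolynomial (Fin 3) ℝ) (p : ℝ[X]) :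
    MvPolynomial.eval v (Polynomial.aeval L p)
      = Polynomial.eval (MvPolynomial.eval v L) p := by
  rw [← MvPolynomial.coe_aeval_eq_eval]
  rw [show (RingHomClass.toRingHom (MvPolynomial.aeval (R := ℝ) v)) (Polynomial.aeval L p)
      = (MvPolynomial.aeval v) (Polynomial.aeval L p) from rfl,
    ← Polynomial.aeval_algHom_apply]
  have : (MvPolynomial.aeval v) L = MvPolynomial.eval v L := by
    rw [MvPolynomial.aeval_def, Algebra.algebraMap_self]; rfl
  simp [Polynomial.aeval_def, this]

theorem stmt_19 :
    ¬ ∃ p1 p2 p3 p4 p5 p6 : Polynomial ℝ, ∀ x y z : ℝ,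
        x^3 =
          p1.eval (y + z) + p2.eval (y - z) + p3.eval (x + z) + p4.eval (x - z)
            + p5.eval (x + y + Real.sqrt 2 * z) + p6.eval (x + y - Real.sqrt 2 * z) := by
  rintro ⟨p1, p2, p3, p4, p5, p6, h⟩
  have hs : Real.sqrt 2 ^ 2 = 2 := Real.sq_sqrt (by norm_num)
  have key : (MvPolynomial.X 0 : MvPolynomial (Fin 3) ℝ)^3 =
      Polynomial.aeval (lin19 0 1 1) p1 + Polynomial.aeval (lin19 0 1 (-1)) p2
      + Polynomial.aeval (lin19 1 0 1) p3 + Polynomial.aeval (lin19 1 0 (-1)) p4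
      + Polynomial.aeval (lin19 1 1 (Real.sqrt 2)) p5
      + Polynomial.aeval (lin19 1 1 (-(Real.sqrt 2))) p6 := by
    apply MvPolynomial.funext
    intro v
    have hv := h (v 0) (v 1) (v 2)
    simp only [map_add, map_pow, MvPolynomial.eval_X, eval_aeval_lin, lin19, map_mul,
      MvPolynomial.eval_C, map_neg]
    rw [hv]; ring_nf
  have hb := congrArg box19 key
  have hX : box19 ((MvPolynomial.X 0 : MvPolynomial (Fin 3) ℝ)^3)
      = 6 * MvPolynomial.X 0 := by
    have h3 : ∀ i : Fin 3, (MvPolynomial.pderiv (R := ℝ) i) 3 = 0 := by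
      intro i
      rw [show (3 : MvPolynomial (Fin 3) ℝ) = MvPolynomial.C 3 from (map_ofNat MvPolynomial.C 3).symm]
      exact MvPolynomial.pderiv_C
    simp [box19, MvPolynomial.pderiv_pow, MvPolynomial.pderiv_X_self,
      MvPolynomial.pderiv_X_of_ne, h3]
    ring
  rw [hX, box19_add, box19_add, box19_add, box19_add, box19_add,
    box19_aeval 0 1 1 (by norm_num), box19_aeval 0 1 (-1) (by norm_num),
    box19_aeval 1 0 1 (by norm_num), box19_aeval 1 0 (-1) (by norm_num),
    box19_aeval 1 1 (Real.sqrt 2) (by rw [hs]; norm_num),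
    box19_aeval 1 1 (-(Real.sqrt 2)) (by rw [neg_pow, hs]; norm_num)] at hb
  have := congrArg (MvPolynomial.eval (fun _ => (1:ℝ))) hb
  simp at this
end
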